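/- Let (X,T) be a topological dynamical system, μ ∈ M(X,T), and suppose there is a strictly increasing sequence A = {a_i} with the function (x,y) ↦ d(T^{a_n}x, T^{a_n}y) converging μ×μ-almost everywhere to d(x,y). Then (X,T) is μ-A-equicontinuous. -/

import Mathlib

open MeasureTheory Filter Topology

section helpers
open Set

-- finitely many uniformly continuous maps
lemma unif_fin {X : Type*} [MetricSpace X] [CompactSpace X] (g : ℕ → X → X)
    (hg : ∀ n, Continuous (g n)) (ε : ℝ) (hε : 0 < ε) (N : ℕ) :
    ∃ δ > (0:ℝ), ∀ n < N, ∀ x y : X, dist x y < δ → dist (g n x) (g n y) < ε := by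
  induction N with
  | zero => exact ⟨1, one_pos, fun n hn => by omega⟩
  | succ N ih =>
    obtain ⟨δ₁, hδ₁, h1⟩ := ih
    have hu : UniformContinuous (g N) := CompactSpace.uniformContinuous_of_continuous (hg N)
    obtain ⟨δ₂, hδ₂, h2⟩ := Metric.uniformContinuous_iff.1 hu ε hε
    refine ⟨min δ₁ δ₂, lt_min hδ₁ hδ₂, fun n hn x y hxy => ?_⟩
    rcases Nat.lt_succ_iff_lt_or_eq.1 hn with h | rfl
    · exact h1 n h x y (hxy.trans_le (min_le_left _ _))
    · exact h2 (hxy.trans_le (min_le_right _ _))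

-- separation of pairwise disjoint compacts
lemma sep {X : Type*} [MetricSpace X] (m : ℕ) (K : ℕ → Set X)
    (hK : ∀ n, IsCompact (K n)) (hd : Pairwise (Function.onFun Disjoint K)) :
    ∃ δ > (0:ℝ), ∀ i < m, ∀ j < m, ∀ x ∈ K i, ∀ y ∈ K j, dist x y < δ → i = j := by
  set S : Finset (ℕ × ℕ) :=
    ((Finset.range m) ×ˢ (Finset.range m)).filter (fun p => p.1 ≠ p.2) with hS
  set U : Set (X × X) := ⋃ p ∈ S, K p.1 ×ˢ K p.2 with hU
  have hUc : IsCompact U := S.finite_toSet.isCompact_biUnion (fun p _ => (hK p.1).prod (hK p.2))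
  have key : ∃ δ > (0:ℝ), ∀ q ∈ U, δ ≤ dist q.1 q.2 := by
    rcases U.eq_empty_or_nonempty with h | h
    · exact ⟨1, one_pos, fun q hq => by simp [h] at hq⟩
    · obtain ⟨q₀, hq₀, hmin⟩ := hUc.exists_isMinOn h
        (continuous_dist.continuousOn : ContinuousOn (fun q : X × X => dist q.1 q.2) U)
      refine ⟨dist q₀.1 q₀.2, ?_, fun q hq => hmin hq⟩
      rw [gt_iff_lt, dist_pos]
      obtain ⟨p, hp, hq⟩ := mem_iUnion₂.1 hq₀
      have hne : p.1 ≠ p.2 := (Finset.mem_filter.1 hp).2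
      intro h
      exact ((hd hne).ne_of_mem hq.1 hq.2) h
  obtain ⟨δ, hδ, h⟩ := key
  refine ⟨δ, hδ, fun i hi j hj x hx y hy hxy => ?_⟩
  by_contra hij
  have : (x, y) ∈ U := mem_iUnion₂.2 ⟨(i, j), Finset.mem_filter.2
    ⟨Finset.mem_product.2 ⟨Finset.mem_range.2 hi, Finset.mem_range.2 hj⟩, hij⟩, ⟨hx, hy⟩⟩
  exact absurd (h _ this) (not_le.2 hxy)

-- lower bound for finitely many nonzero ennreal values
lemma exists_pos_le (v : ℕ → ENNReal) (hv : ∀ n, v n ≠ ⊤) (m : ℕ) :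
    ∃ c : ℝ, 0 < c ∧ ∀ n < m, v n ≠ 0 → ENNReal.ofReal c ≤ v n := by
  induction m with
  | zero => exact ⟨1, one_pos, fun n hn => by omega⟩
  | succ m ih =>
    obtain ⟨c, hc, h⟩ := ih
    by_cases hvm : v m = 0
    · refine ⟨c, hc, fun n hn hne => ?_⟩
      rcases Nat.lt_succ_iff_lt_or_eq.1 hn with h' | rfl
      · exact h n h' hne
      · exact absurd hvm hne
    · refine ⟨min c (v m).toReal, lt_min hc (ENNReal.toReal_pos hvm (hv m)), fun n hn hne => ?_⟩
      rcases Nat.lt_succ_iff_lt_or_eq.1 hn with h' | rfl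
      · exact le_trans (ENNReal.ofReal_le_ofReal (min_le_left _ _)) (h n h' hne)
      · refine le_trans (ENNReal.ofReal_le_ofReal (min_le_right _ _)) ?_
        rw [ENNReal.ofReal_toReal (hv _)]

-- finite Borel partition with small pieces
lemma partition {X : Type*} [MetricSpace X] [CompactSpace X] [MeasurableSpace X]
    [BorelSpace X] (r : ℝ) (hr : 0 < r) :
    ∃ m : ℕ, ∃ P : ℕ → Set X, (∀ n, MeasurableSet (P n)) ∧
      Pairwise (Function.onFun Disjoint P) ∧ (⋃ n, P n) = Set.univ ∧
      (∀ n, ∀ x ∈ P n, ∀ y ∈ P n, dist x y < r) ∧ (∀ n, m ≤ n → P n = ∅) := by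
  obtain ⟨t, ht⟩ := isCompact_univ.elim_finite_subcover
    (fun x : X => Metric.ball x (r/2)) (fun x => Metric.isOpen_ball)
    (fun x _ => Set.mem_iUnion.2 ⟨x, Metric.mem_ball_self (half_pos hr)⟩)
  set l := t.toList with hl
  set f : ℕ → Set X := fun n => if h : n < l.length then Metric.ball (l.get ⟨n, h⟩) (r/2) else ∅
    with hf
  have hfm : ∀ n, MeasurableSet (f n) := by
    intro n
    by_cases h : n < l.length
    · simp only [hf, dif_pos h]; exact Metric.isOpen_ball.measurableSet
    · simp only [hf, dif_neg h]; exact MeasurableSet.empty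
  have hfu : (⋃ n, f n) = Set.univ := by
    apply Set.eq_univ_of_univ_subset
    intro x hx
    obtain ⟨c, hct, hxc⟩ := Set.mem_iUnion₂.1 (ht hx)
    have hcl : c ∈ l := by rw [hl]; exact Finset.mem_toList.2 hct
    obtain ⟨i, hi⟩ := List.mem_iff_get.1 hcl
    refine Set.mem_iUnion.2 ⟨i.1, ?_⟩
    rw [hf]
    simp only [i.2, dif_pos]
    rw [Fin.eta, hi]
    exact hxc
  refine ⟨l.length, disjointed f, fun n => MeasurableSet.disjointed hfm n,
    disjoint_disjointed f, by rw [iUnion_disjointed, hfu], fun n x hx y hy => ?_,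
    fun n hn => ?_⟩
  · have hx' := disjointed_subset f n hx
    have hy' := disjointed_subset f n hy
    simp only [hf] at hx' hy'
    by_cases h : n < l.length
    · simp only [dif_pos h] at hx' hy'
      calc dist x y ≤ dist x (l.get ⟨n, h⟩) + dist (l.get ⟨n, h⟩) y := dist_triangle _ _ _
        _ < r/2 + r/2 := add_lt_add (Metric.mem_ball.1 hx')
            (by rw [dist_comm]; exact Metric.mem_ball.1 hy')
        _ = r := add_halves r
    · simp only [dif_neg h] at hx'; exact absurd hx' (Set.notMem_empty x)
  · apply Set.eq_empty_of_subset_empty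
    have h2 := disjointed_subset f n
    simp only [hf, dif_neg (show ¬ n < l.length by omega)] at h2
    exact h2

lemma key {X : Type*} [MetricSpace X] [CompactSpace X] [MeasurableSpace X]
    [BorelSpace X] (μ : Measure X) [IsProbabilityMeasure μ] (T : X ≃ₜ X) (a : ℕ → ℕ)
    (hae : ∀ᵐ p ∂(μ.prod μ), Tendsto
      (fun n => dist ((⇑T)^[a n] p.1) ((⇑T)^[a n] p.2)) atTop (𝓝 (dist p.1 p.2)))
    (ε θ : ℝ) (hε : 0 < ε) (hθ : 0 < θ) :
    ∃ K : Set X, IsCompact K ∧ μ Kᶜ ≤ ENNReal.ofReal θ ∧ ∃ δ > (0:ℝ),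
      ∀ x ∈ K, ∀ y ∈ K, dist x y < δ →
        ∀ n : ℕ, dist ((⇑T)^[a n] x) ((⇑T)^[a n] y) < ε := by
  have hcont : ∀ n : ℕ, Continuous fun x : X => (⇑T)^[a n] x :=
    fun n => T.continuous.iterate (a n)
  obtain ⟨m, P, hPm, hPd, hPu, hPdiam, hPempty⟩ := partition (X := X) (ε/8) (by linarith)
  set E : ℕ → Set (X × X) := fun N => ⋂ n, ⋂ (_ : N ≤ n),
      {p : X × X | dist ((⇑T)^[a n] p.1) ((⇑T)^[a n] p.2) ≤ dist p.1 p.2 + ε/8} with hE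
  have hEclosed : ∀ N, IsClosed (E N) := fun N =>
    isClosed_iInter fun n => isClosed_iInter fun _ =>
      isClosed_le (Continuous.dist ((hcont n).comp continuous_fst)
        ((hcont n).comp continuous_snd)) (continuous_dist.add continuous_const)
  have hEmeas : ∀ N, MeasurableSet (E N) := fun N => (hEclosed N).measurableSet
  have hEmono : Monotone E := by
    intro N M hNM p hp
    exact mem_iInter.2 fun n => mem_iInter.2 fun hn =>
      mem_iInter.1 (mem_iInter.1 hp n) (hNM.trans hn)
  have hEall : ∀ᵐ p ∂(μ.prod μ), ∃ N, p ∈ E N := by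
    refine hae.mono fun p hp => ?_
    have h1 : ∀ᶠ n in atTop,
        dist ((⇑T)^[a n] p.1) ((⇑T)^[a n] p.2) < dist p.1 p.2 + ε/8 :=
      hp.eventually_lt_const (by linarith)
    obtain ⟨N, hN⟩ := eventually_atTop.1 h1
    exact ⟨N, mem_iInter.2 fun n => mem_iInter.2 fun hn => (hN n hn).le⟩
  have hz : (μ.prod μ) (⋂ N, (E N)ᶜ) = 0 := by
    have h' : {p : X × X | ¬ ∃ N, p ∈ E N} = ⋂ N, (E N)ᶜ := by ext p; simp [not_exists]
    rw [ae_iff] at hEall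
    rw [← h']
    exact hEall
  have hT0 : Tendsto (fun N => (μ.prod μ) ((E N)ᶜ)) atTop (𝓝 0) := by
    have h := tendsto_measure_iInter_atTop (μ := μ.prod μ)
      (s := fun N => (E N)ᶜ)
      (fun N => ((hEmeas N).compl).nullMeasurableSet)
      (fun N M h => compl_subset_compl.2 (hEmono h)) ⟨0, measure_ne_top _ _⟩
    rw [hz] at h
    exact h
  obtain ⟨c, hc, hcle⟩ := exists_pos_le (fun n => μ (P n)) (fun n => measure_ne_top μ _) m
  set β : ℝ := θ / (2 * (m + 1)) with hβ
  have hβpos : 0 < β := by positivity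
  set η : ℝ := (c/2) * β with hη
  have hηpos : 0 < η := by positivity
  obtain ⟨N, hN⟩ : ∃ N, (μ.prod μ) ((E N)ᶜ) ≤ ENNReal.ofReal η := by
    have h := hT0.eventually_lt_const (show (0:ENNReal) < ENNReal.ofReal η from
      ENNReal.ofReal_pos.2 hηpos)
    obtain ⟨N, hN'⟩ := eventually_atTop.1 h
    exact ⟨N, (hN' N le_rfl).le⟩
  set Sl : X → Set X := fun x => {y | (x, y) ∈ E N} with hSl
  have hSlm : ∀ x, MeasurableSet (Sl x) := fun x => (hEmeas N).preimage measurable_prodMk_left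
  set g : X → ENNReal := fun x => μ (Prod.mk x ⁻¹' (E N)ᶜ) with hg
  have hgm : Measurable g := measurable_measure_prodMk_left (hEmeas N).compl
  have hgint : ∫⁻ x, g x ∂μ = (μ.prod μ) (E N)ᶜ := (Measure.prod_apply (hEmeas N).compl).symm
  have hmark : ENNReal.ofReal (c/2) * μ {x | ENNReal.ofReal (c/2) ≤ g x}
      ≤ ENNReal.ofReal η := by
    calc ENNReal.ofReal (c/2) * μ {x | ENNReal.ofReal (c/2) ≤ g x}
        ≤ ∫⁻ x, g x ∂μ := mul_meas_ge_le_lintegral₀ hgm.aemeasurable _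
      _ = (μ.prod μ) (E N)ᶜ := hgint
      _ ≤ ENNReal.ofReal η := hN
  have hbig : μ {x | ENNReal.ofReal (c/2) ≤ g x} ≤ ENNReal.ofReal β := by
    rw [hη, ENNReal.ofReal_mul (by positivity : (0:ℝ) ≤ c/2)] at hmark
    exact (ENNReal.mul_le_mul_iff_right (by simp [ENNReal.ofReal_pos.2 (by positivity : (0:ℝ) < c/2), ne_of_gt]) ENNReal.ofReal_ne_top).1 hmark
  set K' : ℕ → Set X := fun n => {x | x ∈ P n ∧ μ (P n) < 2 * μ (P n ∩ Sl x)} with hK'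
  have hK'sub : ∀ n, K' n ⊆ P n := fun n x hx => hx.1
  have hK'm : ∀ n, MeasurableSet (K' n) := by
    intro n
    have heq : ∀ x : X, P n ∩ Sl x = Prod.mk x ⁻¹' ((Set.univ ×ˢ P n) ∩ E N) := by
      intro x
      ext y
      simp only [Set.mem_inter_iff, Set.mem_preimage, Set.mem_prod, Set.mem_univ, true_and,
        hSl, Set.mem_setOf_eq]
      try tauto
    have hm2 : Measurable fun x => μ (P n ∩ Sl x) := by
      simp_rw [heq]
      exact measurable_measure_prodMk_left ((MeasurableSet.univ.prod (hPm n)).inter (hEmeas N))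
    have hm3 : MeasurableSet {x | μ (P n) < 2 * μ (P n ∩ Sl x)} := by
      have h4 := (hm2.const_mul 2) (measurableSet_Ioi (a := μ (P n)))
      have h5 : (fun x => 2 * μ (P n ∩ Sl x)) ⁻¹' Set.Ioi (μ (P n))
          = {x | μ (P n) < 2 * μ (P n ∩ Sl x)} := rfl
      rwa [h5] at h4
    exact (hPm n).inter hm3
  have hbad : ∀ n, μ (P n \ K' n) ≤ ENNReal.ofReal β := by
    intro n
    by_cases h0 : μ (P n) = 0
    · exact le_trans (le_trans (measure_mono Set.diff_subset) h0.le) (zero_le)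
    · have hnm : n < m := by
        by_contra h
        exact h0 (by rw [hPempty n (by omega)]; simp)
      refine le_trans (measure_mono ?_) hbig
      rintro x ⟨hxP, hxn⟩
      have hx2 : 2 * μ (P n ∩ Sl x) ≤ μ (P n) := by
        by_contra h
        exact hxn ⟨hxP, not_le.1 h⟩
      have h3 : μ (P n ∩ Sl x) + μ (P n \ Sl x) = μ (P n) := measure_inter_add_diff _ (hSlm x)
      have h4 : μ (P n ∩ Sl x) ≤ μ (P n \ Sl x) := by
        rw [two_mul, ← h3] at hx2
        exact (ENNReal.add_le_add_iff_left (measure_ne_top μ _)).1 hx2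
      have h5 : ENNReal.ofReal c ≤ 2 * μ (P n \ Sl x) := by
        calc ENNReal.ofReal c ≤ μ (P n) := hcle n hnm h0
          _ = μ (P n ∩ Sl x) + μ (P n \ Sl x) := h3.symm
          _ ≤ μ (P n \ Sl x) + μ (P n \ Sl x) := add_le_add_left h4 _
          _ = 2 * μ (P n \ Sl x) := (two_mul _).symm
      have h6 : ENNReal.ofReal (c/2) ≤ μ (P n \ Sl x) := by
        have h7 : ENNReal.ofReal (c/2) * 2 = ENNReal.ofReal c := by
          rw [show (2:ENNReal) = ENNReal.ofReal 2 by simp,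
            ← ENNReal.ofReal_mul (by positivity)]
          norm_num
        rw [← h7, mul_comm (2:ENNReal)] at h5
        exact (ENNReal.mul_le_mul_iff_left two_ne_zero (by norm_num)).1 h5
      refine le_trans h6 (measure_mono ?_)
      intro z hz
      exact fun hz' => hz.2 hz'
  have hreg : ∀ n, ∃ F : Set X, F ⊆ K' n ∧ IsClosed F ∧ μ (K' n \ F) ≤ ENNReal.ofReal β := by
    intro n
    obtain ⟨F, h1, h2, h3⟩ := (hK'm n).exists_isClosed_diff_lt (measure_ne_top μ _)
      (show ENNReal.ofReal β ≠ 0 by simp [ENNReal.ofReal_pos.2 hβpos, ne_of_gt])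
    exact ⟨F, h1, h2, h3.le⟩
  choose F hF1 hF2 hF3 using hreg
  have hFc : ∀ n, IsCompact (F n) := fun n => (hF2 n).isCompact
  have hFP : ∀ n, F n ⊆ P n := fun n => (hF1 n).trans (hK'sub n)
  have hFd : Pairwise (Function.onFun Disjoint F) :=
    fun i j hij => ((hPd hij).mono (hFP i) (hFP j))
  set K : Set X := ⋃ n ∈ Finset.range m, F n with hK
  have hKc : IsCompact K :=
    (Finset.range m).finite_toSet.isCompact_biUnion (fun n _ => hFc n)
  have hKm : μ Kᶜ ≤ ENNReal.ofReal θ := by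
    have hsub : Kᶜ ⊆ ⋃ n ∈ Finset.range m, ((P n \ K' n) ∪ (K' n \ F n)) := by
      intro x hx
      have hx1 : x ∈ ⋃ n, P n := by rw [hPu]; trivial
      obtain ⟨n, hn⟩ := mem_iUnion.1 hx1
      have hnm : n < m := by
        by_contra h
        rw [hPempty n (by omega)] at hn
        exact hn
      refine mem_iUnion₂.2 ⟨n, Finset.mem_range.2 hnm, ?_⟩
      by_cases hxK' : x ∈ K' n
      · exact Or.inr ⟨hxK', fun hxF => hx (mem_iUnion₂.2 ⟨n, Finset.mem_range.2 hnm, hxF⟩)⟩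
      · exact Or.inl ⟨hn, hxK'⟩
    calc μ Kᶜ ≤ ∑ n ∈ Finset.range m, μ ((P n \ K' n) ∪ (K' n \ F n)) :=
          (measure_mono hsub).trans (measure_biUnion_finset_le _ _)
      _ ≤ ∑ n ∈ Finset.range m, (ENNReal.ofReal β + ENNReal.ofReal β) :=
          Finset.sum_le_sum fun n _ =>
            (measure_union_le _ _).trans (add_le_add (hbad n) (hF3 n))
      _ = (m : ENNReal) * (ENNReal.ofReal β + ENNReal.ofReal β) := by
          rw [Finset.sum_const, Finset.card_range, nsmul_eq_mul]
      _ ≤ ENNReal.ofReal θ := by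
          rw [← ENNReal.ofReal_add hβpos.le hβpos.le, ← ENNReal.ofReal_natCast m,
            ← ENNReal.ofReal_mul (by positivity)]
          apply ENNReal.ofReal_le_ofReal
          rw [hβ]
          rw [← add_div]
          have hm1 : (0:ℝ) < 2 * ((m:ℝ) + 1) := by positivity
          have heq2 : (m:ℝ) * ((θ + θ) / (2 * ((m:ℝ) + 1)))
              = ((m:ℝ) / ((m:ℝ) + 1)) * θ := by field_simp; ring
          rw [heq2]
          calc ((m:ℝ) / ((m:ℝ) + 1)) * θ ≤ 1 * θ := by
                apply mul_le_mul_of_nonneg_right _ hθ.le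
                rw [div_le_one (by positivity)]
                linarith
            _ = θ := one_mul θ
  obtain ⟨δ₁, hδ₁, hsep⟩ := sep m F hFc hFd
  obtain ⟨δ₂, hδ₂, hfin⟩ := unif_fin (fun n x => (⇑T)^[a n] x) hcont ε hε N
  refine ⟨K, hKc, hKm, min δ₁ δ₂, lt_min hδ₁ hδ₂, ?_⟩
  intro x hx y hy hxy n
  obtain ⟨i, him, hxF⟩ := mem_iUnion₂.1 hx
  obtain ⟨j, hjm, hyF⟩ := mem_iUnion₂.1 hy
  by_cases hnN : n < N
  · exact hfin n hnN x y (lt_of_lt_of_le hxy (min_le_right _ _))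
  · have hij : i = j := hsep i (Finset.mem_range.1 him) j (Finset.mem_range.1 hjm)
      x hxF y hyF (hxy.trans_le (min_le_left _ _))
    subst hij
    obtain ⟨hxP, hxμ⟩ := hF1 i hxF
    obtain ⟨hyP, hyμ⟩ := hF1 i hyF
    have hne : (P i ∩ Sl x ∩ Sl y).Nonempty := by
      rw [Set.nonempty_iff_ne_empty]
      intro hemp
      have hss : P i ∩ Sl x ⊆ P i \ Sl y := by
        rintro z ⟨hz1, hz2⟩
        refine ⟨hz1, fun hz3 => ?_⟩
        have : z ∈ P i ∩ Sl x ∩ Sl y := ⟨⟨hz1, hz2⟩, hz3⟩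
        rw [hemp] at this
        exact this
      have h8 : μ (P i ∩ Sl x) + μ (P i ∩ Sl y) ≤ μ (P i) := by
        calc μ (P i ∩ Sl x) + μ (P i ∩ Sl y) ≤ μ (P i \ Sl y) + μ (P i ∩ Sl y) :=
              add_le_add_left (measure_mono hss) _
          _ = μ (P i ∩ Sl y) + μ (P i \ Sl y) := add_comm _ _
          _ = μ (P i) := measure_inter_add_diff _ (hSlm y)
      have h9 : μ (P i) + μ (P i) < 2 * μ (P i ∩ Sl x) + 2 * μ (P i ∩ Sl y) :=
        ENNReal.add_lt_add hxμ hyμ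
      have h10 : 2 * μ (P i ∩ Sl x) + 2 * μ (P i ∩ Sl y) ≤ μ (P i) + μ (P i) := by
        rw [← mul_add, two_mul]
        exact add_le_add h8 h8
      exact absurd (h9.trans_le h10) (lt_irrefl _)
    obtain ⟨z, ⟨hzP, hzx⟩, hzy⟩ := hne
    have hEx : dist ((⇑T)^[a n] x) ((⇑T)^[a n] z) ≤ dist x z + ε/8 :=
      mem_iInter.1 (mem_iInter.1 hzx n) (not_lt.1 hnN)
    have hEy : dist ((⇑T)^[a n] y) ((⇑T)^[a n] z) ≤ dist y z + ε/8 :=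
      mem_iInter.1 (mem_iInter.1 hzy n) (not_lt.1 hnN)
    have hd1 : dist x z < ε/8 := hPdiam i x hxP z hzP
    have hd2 : dist y z < ε/8 := hPdiam i y hyP z hzP
    calc dist ((⇑T)^[a n] x) ((⇑T)^[a n] y)
        ≤ dist ((⇑T)^[a n] x) ((⇑T)^[a n] z) + dist ((⇑T)^[a n] z) ((⇑T)^[a n] y) :=
          dist_triangle _ _ _
      _ = dist ((⇑T)^[a n] x) ((⇑T)^[a n] z) + dist ((⇑T)^[a n] y) ((⇑T)^[a n] z) := by
          rw [dist_comm ((⇑T)^[a n] z)]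
      _ ≤ (dist x z + ε/8) + (dist y z + ε/8) := add_le_add hEx hEy
      _ < (ε/8 + ε/8) + (ε/8 + ε/8) := by linarith
      _ ≤ ε := by linarith

end helpers

theorem stmt13 {X : Type*} [MetricSpace X] [CompactSpace X] [MeasurableSpace X]
    [BorelSpace X] (μ : Measure X) [IsProbabilityMeasure μ] (T : X ≃ₜ X)
    (hT : MeasurePreserving T μ μ) (a : ℕ → ℕ) (ha : StrictMono a)
    (hae : ∀ᵐ p ∂(μ.prod μ), Tendsto
      (fun n => dist ((⇑T)^[a n] p.1) ((⇑T)^[a n] p.2)) atTop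
      (𝓝 (dist p.1 p.2))) :
    ∀ τ > (0 : ℝ), ∃ K : Set X, IsCompact K ∧
      μ K > ENNReal.ofReal (1 - τ) ∧ ∀ ε > (0 : ℝ), ∃ δ > (0 : ℝ),
      ∀ x ∈ K, ∀ y ∈ K, dist x y < δ →
        ∀ n : ℕ, dist ((⇑T)^[a n] x) ((⇑T)^[a n] y) < ε := by
  intro τ hτ
  set τ' : ℝ := min τ 1 / 2 with hτ'
  have hτ'pos : 0 < τ' := div_pos (lt_min hτ one_pos) two_pos
  have hτ'le : τ' ≤ 1/2 := by
    rw [hτ']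
    have : min τ 1 ≤ 1 := min_le_right τ 1
    linarith
  have hτ'lt : τ' < τ := by
    rw [hτ']
    have : min τ 1 ≤ τ := min_le_left τ 1
    linarith
  have hKk : ∀ k : ℕ, ∃ K : Set X, IsCompact K ∧
      μ Kᶜ ≤ ENNReal.ofReal (τ'/2/2^k) ∧ ∃ δ > (0:ℝ),
      ∀ x ∈ K, ∀ y ∈ K, dist x y < δ →
        ∀ n : ℕ, dist ((⇑T)^[a n] x) ((⇑T)^[a n] y) < 1/(k+1) :=
    fun k => key μ T a hae (1/(k+1)) (τ'/2/2^k) (by positivity) (by positivity)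
  choose Ks hKc hKm hKd using hKk
  have hKmeas : MeasurableSet (⋂ k, Ks k) :=
    MeasurableSet.iInter fun k => (hKc k).isClosed.measurableSet
  refine ⟨⋂ k, Ks k, ?_, ?_, ?_⟩
  · exact (hKc 0).of_isClosed_subset (isClosed_iInter fun k => (hKc k).isClosed)
      (Set.iInter_subset _ 0)
  · have h1 : μ (⋂ k, Ks k)ᶜ ≤ ∑' k, μ (Ks k)ᶜ := by
      rw [Set.compl_iInter]
      exact measure_iUnion_le _
    have h2 : ∑' k, μ (Ks k)ᶜ ≤ ∑' k, ENNReal.ofReal (τ'/2/2^k) :=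
      ENNReal.tsum_le_tsum fun k => hKm k
    have h3 : ∑' k : ℕ, ENNReal.ofReal (τ'/2/2^k) = ENNReal.ofReal τ' := by
      rw [← ENNReal.ofReal_tsum_of_nonneg (fun k => by positivity)
        (summable_geometric_two' τ'), tsum_geometric_two' τ']
    have hcompl : μ (⋂ k, Ks k)ᶜ ≤ ENNReal.ofReal τ' := h1.trans (h2.trans h3.le)
    have hsum : μ (⋂ k, Ks k) + μ (⋂ k, Ks k)ᶜ = 1 := by
      rw [measure_add_measure_compl hKmeas, measure_univ]
    have hlow : ENNReal.ofReal (1 - τ') ≤ μ (⋂ k, Ks k) := by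
      rw [ENNReal.ofReal_sub 1 hτ'pos.le, ENNReal.ofReal_one]
      rw [tsub_le_iff_right]
      calc (1 : ENNReal) = μ (⋂ k, Ks k) + μ (⋂ k, Ks k)ᶜ := hsum.symm
        _ ≤ μ (⋂ k, Ks k) + ENNReal.ofReal τ' := add_le_add_right hcompl _
    calc ENNReal.ofReal (1 - τ) < ENNReal.ofReal (1 - τ') :=
          (ENNReal.ofReal_lt_ofReal_iff (by linarith)).2 (by linarith)
      _ ≤ μ (⋂ k, Ks k) := hlow
  · intro ε hε
    obtain ⟨k, hk⟩ := exists_nat_one_div_lt hε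
    obtain ⟨δ, hδ, h⟩ := hKd k
    refine ⟨δ, hδ, fun x hx y hy hxy n => ?_⟩
    exact lt_trans (h x (Set.iInter_subset _ k hx) y (Set.iInter_subset _ k hy) hxy n)
      (by exact_mod_cast hk)
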